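/- (Distance bound d̃_0 ≥ min(d_0, d_0ᵀ) for the hypergraph product.) Let δ ∈ M_{n1 × n0}(F2). Suppose R_a ∈ M_{n0 × n0}(F2) and R_b ∈ M_{n1 × n1}(F2) satisfy δ·R_a = R_b·δ, and that there is no U ∈ M_{n0 × n1}(F2) with R_a = U·δ and R_b = δ·U (i.e. the pair (R_a, R_b), viewed as a vector, is a nontrivial cycle of the product boundary map δ̃_0 = [δ⊗1 , 1⊗δᵀ]). Then either there exists a nonzero c ∈ ker(δ) with |c| ≤ |R_a| + |R_b|, or there exists a nonzero c' ∈ ker(δᵀ) with |c'| ≤ |R_a| + |R_b|. -/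

import Mathlib

open Matrix
open scoped Kronecker

abbrev F2 := ZMod 2

/-- Hamming weight of a vector over `F2`. -/
def vwt {ι : Type*} [Fintype ι] (v : ι → F2) : ℕ :=
  (Finset.univ.filter fun i => v i ≠ 0).card

/-- Hamming weight of a matrix over `F2` (number of nonzero entries). -/
def mwt {ι κ : Type*} [Fintype ι] [Fintype κ] (M : Matrix ι κ F2) : ℕ :=
  (Finset.univ.filter fun p : ι × κ => M p.1 p.2 ≠ 0).card

/-- Nullity of a matrix over `F2`: dimension of the kernel of the induced linear map. -/
noncomputable def nullity {ι κ : Type*} [Fintype ι] [Fintype κ] (M : Matrix ι κ F2) : ℕ :=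
  Module.finrank F2 (LinearMap.ker M.mulVecLin)

-- weight of M *ᵥ v ≤ mwt M
lemma vwt_mulVec_le {m n : ℕ} (M : Matrix (Fin m) (Fin n) F2) (v : Fin n → F2) :
    vwt (M *ᵥ v) ≤ mwt M := by
  classical
  rcases Nat.eq_zero_or_pos n with hn | hn
  · subst hn
    have hz : M *ᵥ v = 0 := by ext i; simp [mulVec, dotProduct]
    simp [vwt, hz]
  haveI : Nonempty (Fin n) := ⟨⟨0, hn⟩⟩
  have key : ∀ i, (M *ᵥ v) i ≠ 0 → ∃ j, M i j ≠ 0 := by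
    intro i hi
    by_contra h
    push_neg at h
    apply hi
    simp only [mulVec, dotProduct]
    apply Finset.sum_eq_zero
    intro j _
    rw [h j, zero_mul]
  apply Finset.card_le_card_of_injOn
    (fun i => (i, if h : ∃ j, M i j ≠ 0 then h.choose else Classical.arbitrary _))
  · intro i hi
    simp only [Finset.mem_coe, Finset.mem_filter, Finset.mem_univ, true_and] at hi ⊢
    rw [dif_pos (key i hi)]
    exact (key i hi).choose_spec
  · intro a _ b _ hab
    exact (Prod.mk.injEq ..).mp hab |>.1

lemma mwt_transpose {m n : ℕ} (M : Matrix (Fin m) (Fin n) F2) : mwt Mᵀ = mwt M := by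
  classical
  unfold mwt
  apply Finset.card_bij (fun p _ => (p.2, p.1))
  · intro p hp; exact Finset.mem_filter.mpr ⟨Finset.mem_univ _, by simpa [Matrix.transpose_apply] using (Finset.mem_filter.mp hp).2⟩
  · intro a _ b _ hab
    exact Prod.ext ((Prod.mk.injEq ..).mp hab).2 ((Prod.mk.injEq ..).mp hab).1
  · intro p hp
    refine ⟨(p.2, p.1), ?_, rfl⟩
    exact Finset.mem_filter.mpr ⟨Finset.mem_univ _, by simpa [Matrix.transpose_apply] using (Finset.mem_filter.mp hp).2⟩

lemma ext_of_mulVec {m n : ℕ} {M N : Matrix (Fin m) (Fin n) F2}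
    (h : ∀ v, M *ᵥ v = N *ᵥ v) : M = N := by
  ext i j
  have := congrFun (h (Pi.single j 1)) i
  simpa [Matrix.mulVec_single_one] using this

lemma exists_gen_inverse {m n : ℕ} (δ : Matrix (Fin m) (Fin n) F2) :
    ∃ G : Matrix (Fin n) (Fin m) F2, δ * G * δ = δ := by
  classical
  set f := δ.mulVecLin
  obtain ⟨q, hq⟩ := Submodule.exists_isCompl (LinearMap.range f)
  obtain ⟨s, hs⟩ := f.rangeRestrict.exists_rightInverse_of_surjective
    (LinearMap.range_rangeRestrict f)
  set g : (Fin m → F2) →ₗ[F2] (Fin n → F2) := s ∘ₗ ((LinearMap.range f).linearProjOfIsCompl q hq)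
  refine ⟨LinearMap.toMatrix' g, ?_⟩
  apply ext_of_mulVec
  intro v
  have h1 : ∀ w, (LinearMap.toMatrix' g) *ᵥ w = g w := by
    intro w
    exact congrFun (congrArg DFunLike.coe (Matrix.toLin'_toMatrix' g)) w
  rw [← Matrix.mulVec_mulVec, ← Matrix.mulVec_mulVec, h1]
  have h2 : δ *ᵥ v = f v := rfl
  rw [h2]
  have h3 : ((LinearMap.range f).linearProjOfIsCompl q hq) (f v) = ⟨f v, LinearMap.mem_range_self f v⟩ :=
    Submodule.linearProjOfIsCompl_apply_left hq ⟨f v, LinearMap.mem_range_self f v⟩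
  simp only [g, LinearMap.comp_apply, h3]
  have h4 : f (s ⟨f v, LinearMap.mem_range_self f v⟩) = f v := by
    have := congrFun (congrArg DFunLike.coe hs) ⟨f v, LinearMap.mem_range_self f v⟩
    simpa [LinearMap.rangeRestrict, Subtype.ext_iff] using congrArg Subtype.val this
  exact h4

lemma vec_eq_of_add_eq_zero {n : ℕ} {v w : Fin n → F2} (h : v + w = 0) : v = w := by
  funext i
  have := congrFun h i
  have h2 : v i + w i = 0 := this
  have : v i = - w i := eq_neg_of_add_eq_zero_left h2
  rwa [CharTwo.neg_eq] at this

lemma mat_add_self {m n : ℕ} (M : Matrix (Fin m) (Fin n) F2) : M + M = 0 := by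
  ext i j
  exact CharTwo.add_self_eq_zero _

lemma mat_eq_of_add_eq_zero {m n : ℕ} {M N : Matrix (Fin m) (Fin n) F2} (h : M + N = 0) : M = N := by
  ext i j
  have h2 : M i j + N i j = 0 := congrFun (congrFun (congrArg (fun X => X) h) i) j
  have : M i j = - N i j := eq_neg_of_add_eq_zero_left h2
  rwa [CharTwo.neg_eq] at this

lemma factor_left {m n k : ℕ} (δ : Matrix (Fin m) (Fin n) F2) (G : Matrix (Fin n) (Fin m) F2)
    (hG : δ * G * δ = δ) (R : Matrix (Fin k) (Fin n) F2)
    (hker : ∀ y, δ *ᵥ y = 0 → R *ᵥ y = 0) : R = R * G * δ := by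
  apply ext_of_mulVec
  intro v
  have h1 : δ *ᵥ (v + G *ᵥ (δ *ᵥ v)) = 0 := by
    rw [Matrix.mulVec_add, Matrix.mulVec_mulVec, Matrix.mulVec_mulVec, hG]
    funext i
    exact CharTwo.add_self_eq_zero _
  have h2 := hker _ h1
  rw [Matrix.mulVec_add] at h2
  have h3 : R *ᵥ v = R *ᵥ (G *ᵥ (δ *ᵥ v)) := vec_eq_of_add_eq_zero h2
  rw [h3, Matrix.mulVec_mulVec, Matrix.mulVec_mulVec, Matrix.mul_assoc]


/-- distance bound `d̃₀ ≥ min(d₀, d₀ᵀ)` for the hypergraph product: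
a nontrivial cycle `(R_a, R_b)` of the product boundary map yields a nonzero kernel
vector of `δ` or of `δᵀ` of weight at most `|R_a| + |R_b|`. -/
theorem hypergraph_product_second_distance
    (n0 n1 : ℕ) (δ : Matrix (Fin n1) (Fin n0) F2)
    (Ra : Matrix (Fin n0) (Fin n0) F2) (Rb : Matrix (Fin n1) (Fin n1) F2)
    (hcycle : δ * Ra = Rb * δ)
    (hnontriv : ¬ ∃ U : Matrix (Fin n0) (Fin n1) F2, Ra = U * δ ∧ Rb = δ * U) :
    (∃ c : Fin n0 → F2, c ≠ 0 ∧ δ.mulVec c = 0 ∧ vwt c ≤ mwt Ra + mwt Rb) ∨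
    (∃ c' : Fin n1 → F2, c' ≠ 0 ∧ δᵀ.mulVec c' = 0 ∧ vwt c' ≤ mwt Ra + mwt Rb) := by
  by_contra hcon
  push_neg at hcon
  obtain ⟨hL, hR⟩ := hcon
  apply hnontriv
  -- Ra kills ker δ
  have hker : ∀ y, δ *ᵥ y = 0 → Ra *ᵥ y = 0 := by
    intro y hy
    by_contra hne
    have h1 : δ *ᵥ (Ra *ᵥ y) = 0 := by
      rw [Matrix.mulVec_mulVec, hcycle, ← Matrix.mulVec_mulVec, hy, Matrix.mulVec_zero]
    have h2 := hL (Ra *ᵥ y) hne h1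
    exact absurd (le_trans (vwt_mulVec_le Ra y) (Nat.le_add_right _ _)) (not_le_of_gt h2)
  -- Rbᵀ kills ker δᵀ
  have hkerT : ∀ x, δᵀ *ᵥ x = 0 → Rbᵀ *ᵥ x = 0 := by
    intro x hx
    by_contra hne
    have htr : δᵀ * Rbᵀ = Raᵀ * δᵀ := by
      rw [← Matrix.transpose_mul, ← hcycle, Matrix.transpose_mul]
    have h1 : δᵀ *ᵥ (Rbᵀ *ᵥ x) = 0 := by
      rw [Matrix.mulVec_mulVec, htr, ← Matrix.mulVec_mulVec, hx, Matrix.mulVec_zero]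
    have h2 := hR (Rbᵀ *ᵥ x) hne h1
    have h3 : vwt (Rbᵀ *ᵥ x) ≤ mwt Ra + mwt Rb := by
      calc vwt (Rbᵀ *ᵥ x) ≤ mwt Rbᵀ := vwt_mulVec_le _ _
        _ = mwt Rb := mwt_transpose _
        _ ≤ mwt Ra + mwt Rb := Nat.le_add_left _ _
    exact absurd h3 (not_le_of_gt h2)
  obtain ⟨G, hG⟩ := exists_gen_inverse δ
  have hGT : δᵀ * Gᵀ * δᵀ = δᵀ := by
    have h := congrArg Matrix.transpose hG
    simp only [Matrix.transpose_mul] at h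
    rwa [← Matrix.mul_assoc] at h
  have hRa : Ra = Ra * G * δ := factor_left δ G hG Ra hker
  have hRbT : Rbᵀ = Rbᵀ * Gᵀ * δᵀ := factor_left δᵀ Gᵀ hGT Rbᵀ hkerT
  have hRb : Rb = δ * (G * Rb) := by
    have h := congrArg Matrix.transpose hRbT
    simp only [Matrix.transpose_mul, Matrix.transpose_transpose] at h
    exact h
  set U := Ra * G with hU
  set V := G * Rb with hV
  have e1 : δ * U * δ = Rb * δ := by
    rw [Matrix.mul_assoc, ← hRa, hcycle]
  have e2 : δ * V * δ = Rb * δ := by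
    rw [← hRb]
  have hD : δ * (U + V) * δ = 0 := by
    rw [Matrix.mul_add, Matrix.add_mul, e1, e2]
    exact mat_add_self _
  refine ⟨U + G * (δ * (U + V)), ?_, ?_⟩
  · rw [Matrix.add_mul, Matrix.mul_assoc G, hD, Matrix.mul_zero, add_zero]
    exact hRa
  · have h5 : δ * (G * (δ * (U + V))) = δ * (U + V) := by
      rw [← Matrix.mul_assoc, ← Matrix.mul_assoc, hG]
    rw [Matrix.mul_add, h5, Matrix.mul_add, ← add_assoc, mat_add_self, zero_add]
    exact hRb
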